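/- Fix c ≥ 2√α, fix l with 0 < l < 1 - k + α k, and let v̌ : ℝ → ℝ be a C² solution of equation (E2) with speed c satisfying 0 < v̌(ξ) < (1 + kK* - K*)/(1 + kK* - lK*) for all ξ ∈ ℝ. Then the pair (u̲, v̲) with u̲ = K*·l·v̌ and v̲ = v̌ is a lower solution of (TW) with speed c: u̲'' - c u̲' - (K* - u̲)(1 - α - (K* - u̲ + v̲)/(1 + k(K* - u̲))) ≥ 0 and v̲'' - c v̲' + v̲(1 - (K* - u̲ + v̲)/(1 + k(K* - u̲))) = v̲²·kK*(1 - l)/(1 + kK*(1 - l v̲)) ≥ 0 on ℝ, with (u̲, v̲)(ξ) → (0, 0) as ξ → -∞ and the limit of (u̲, v̲) at +∞ equal to (K*l·(1 + kK* - K*)/(1 + kK* - lK*), (1 + kK* - K*)/(1 + kK* - lK*)), which is ≤ (K*, 1) componentwise. -/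

import Mathlib

open Filter

/-- The equilibrium value `K* = (1 - α)/(1 - k + αk)`. -/
noncomputable def Kstar (α k : ℝ) : ℝ := (1 - α) / (1 - k + α * k)

/-- A traveling wave solution of system (TW) with speed `c`. -/
def IsTravelingWave (α k c : ℝ) (u v : ℝ → ℝ) : Prop :=
  ContDiff ℝ 2 u ∧ ContDiff ℝ 2 v ∧
  (∀ ξ : ℝ, deriv (deriv u) ξ - c * deriv u ξ -
      (Kstar α k - u ξ) *
        (1 - α - (Kstar α k - u ξ + v ξ) / (1 + k * (Kstar α k - u ξ))) = 0) ∧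
  (∀ ξ : ℝ, deriv (deriv v) ξ - c * deriv v ξ +
      v ξ * (1 - (Kstar α k - u ξ + v ξ) / (1 + k * (Kstar α k - u ξ))) = 0) ∧
  Tendsto u atBot (nhds 0) ∧ Tendsto v atBot (nhds 0) ∧
  Tendsto u atTop (nhds (Kstar α k)) ∧ Tendsto v atTop (nhds 1)

set_option maxHeartbeats 1000000 in
theorem lower_solution
    (α k : ℝ) (hα : 0 < α) (hα1 : α < 1) (hk : 0 < k) (hk1 : k < 1)
    (c : ℝ) (hc : 2 * Real.sqrt α ≤ c)
    (l : ℝ) (hl : 0 < l) (hl1 : l < 1 - k + α * k)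
    (vc : ℝ → ℝ) (hvcC2 : ContDiff ℝ 2 vc)
    (hE2 : ∀ ξ : ℝ, deriv (deriv vc) ξ - c * deriv vc ξ +
        α / ((1 - k + α * k) * (1 + k * Kstar α k * (1 - l * vc ξ))) *
          (vc ξ * (1 - (1 + k * Kstar α k - l * Kstar α k) /
              (1 + k * Kstar α k - Kstar α k) * vc ξ)) = 0)
    (hvc_bot : Tendsto vc atBot (nhds 0))
    (hvc_top : Tendsto vc atTop
      (nhds ((1 + k * Kstar α k - Kstar α k) / (1 + k * Kstar α k - l * Kstar α k))))
    (hrange : ∀ ξ : ℝ, 0 < vc ξ ∧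
        vc ξ < (1 + k * Kstar α k - Kstar α k) / (1 + k * Kstar α k - l * Kstar α k)) :
    (∀ ξ : ℝ,
        0 ≤ deriv (deriv (fun x => Kstar α k * l * vc x)) ξ -
            c * deriv (fun x => Kstar α k * l * vc x) ξ -
            (Kstar α k - Kstar α k * l * vc ξ) *
              (1 - α -
                (Kstar α k - Kstar α k * l * vc ξ + vc ξ) /
                  (1 + k * (Kstar α k - Kstar α k * l * vc ξ)))) ∧
    (∀ ξ : ℝ,
        deriv (deriv vc) ξ - c * deriv vc ξ +
            vc ξ *
              (1 - (Kstar α k - Kstar α k * l * vc ξ + vc ξ) /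
                  (1 + k * (Kstar α k - Kstar α k * l * vc ξ))) =
          vc ξ ^ 2 * (k * Kstar α k * (1 - l) / (1 + k * Kstar α k * (1 - l * vc ξ))) ∧
        0 ≤ vc ξ ^ 2 * (k * Kstar α k * (1 - l) / (1 + k * Kstar α k * (1 - l * vc ξ)))) ∧
    Tendsto (fun x => Kstar α k * l * vc x) atBot (nhds 0) ∧
    Tendsto vc atBot (nhds 0) ∧
    Tendsto (fun x => Kstar α k * l * vc x) atTop
      (nhds (Kstar α k * l *
        ((1 + k * Kstar α k - Kstar α k) / (1 + k * Kstar α k - l * Kstar α k)))) ∧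
    Tendsto vc atTop
      (nhds ((1 + k * Kstar α k - Kstar α k) / (1 + k * Kstar α k - l * Kstar α k))) ∧
    Kstar α k * l *
        ((1 + k * Kstar α k - Kstar α k) / (1 + k * Kstar α k - l * Kstar α k)) ≤ Kstar α k ∧
    (1 + k * Kstar α k - Kstar α k) / (1 + k * Kstar α k - l * Kstar α k) ≤ 1 := by
  
  have hD : 0 < 1 - k + α * k := by nlinarith
  have hKD : Kstar α k * (1 - k + α * k) = 1 - α := by
    rw [Kstar]; field_simp
  have hK0 : 0 < Kstar α k := by
    rw [Kstar]; exact div_pos (by linarith) hD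
  obtain ⟨K, hKdef⟩ : ∃ K, Kstar α k = K := ⟨_, rfl⟩
  rw [hKdef] at hKD hK0 hE2 hvc_top hrange ⊢
  have hl1' : l < 1 := by nlinarith
  have hA : (1 + k * K - K) * (1 - k + α * k) = α := by nlinarith [hKD]
  have hB : (1 + k * K - l * K) * (1 - k + α * k) = 1 - l * (1 - α) := by nlinarith [hKD]
  have hA0 : 0 < 1 + k * K - K := by nlinarith
  have hlB : 0 < 1 - l * (1 - α) := by nlinarith
  have hB0 : 0 < 1 + k * K - l * K := by nlinarith
  -- l * A < B
  have hlAB : l * (1 + k * K - K) < 1 + k * K - l * K := by nlinarith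
  -- A ≤ B
  have hAB : 1 + k * K - K ≤ 1 + k * K - l * K := by nlinarith
  have hdiff : Differentiable ℝ vc := hvcC2.differentiable (by norm_num)
  have hdiff' : Differentiable ℝ (deriv vc) := by
    have h2 : ContDiff ℝ (1 + 1) vc := by norm_num; exact hvcC2
    exact (contDiff_succ_iff_deriv.mp h2).2.2.differentiable one_ne_zero
  have hd1 : ∀ ξ : ℝ, deriv (fun x => K * l * vc x) ξ = K * l * deriv vc ξ := fun ξ =>
    deriv_const_mul _ (hdiff ξ)
  have hd2 : ∀ ξ : ℝ, deriv (deriv (fun x => K * l * vc x)) ξ = K * l * deriv (deriv vc) ξ := by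
    intro ξ
    have : deriv (fun x => K * l * vc x) = fun x => K * l * deriv vc x := funext hd1
    rw [this, deriv_const_mul _ (hdiff' ξ)]
  -- per-point facts
  have hv0 : ∀ ξ : ℝ, 0 < vc ξ := fun ξ => (hrange ξ).1
  have hvB : ∀ ξ : ℝ, vc ξ * (1 + k * K - l * K) < 1 + k * K - K := by
    intro ξ
    have := (hrange ξ).2
    calc vc ξ * (1 + k * K - l * K)
        < (1 + k * K - K) / (1 + k * K - l * K) * (1 + k * K - l * K) := by
          exact mul_lt_mul_of_pos_right this hB0
      _ = 1 + k * K - K := by exact div_mul_cancel₀ _ hB0.ne'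
  have hlv : ∀ ξ : ℝ, l * vc ξ < 1 := by
    intro ξ
    have h1 := hvB ξ
    have h2 := hv0 ξ
    nlinarith [mul_lt_mul_of_pos_left h1 hl]
  have hP0 : ∀ ξ : ℝ, 0 < 1 + k * K * (1 - l * vc ξ) := by
    intro ξ
    have := hlv ξ
    nlinarith [mul_pos hk hK0]
  have hQ : ∀ ξ : ℝ, 1 + k * (K - K * l * vc ξ) = 1 + k * K * (1 - l * vc ξ) := by
    intro ξ; ring
  refine ⟨?_, ?_, ?_, hvc_bot, ?_, hvc_top, ?_, ?_⟩
  · -- u lower-solution inequality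
    intro ξ
    rw [hd1, hd2]
    set v := vc ξ with hv
    have hE := hE2 ξ
    rw [← hv] at hE
    have hP := hP0 ξ
    rw [← hv] at hP
    have hPne : (1 + k * K * (1 - l * v)) ≠ 0 := ne_of_gt hP
    have hDne : (1 - k + α * k) ≠ 0 := ne_of_gt hD
    have hAne : (1 + k * K - K) ≠ 0 := ne_of_gt hA0
    have hQne : 1 + k * (K - K * l * v) ≠ 0 := by
      rw [show 1 + k * (K - K * l * v) = 1 + k * K * (1 - l * v) by ring]; exact hPne
    have hE' : (deriv (deriv vc) ξ - c * deriv vc ξ) *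
        ((1 - k + α * k) * (1 + k * K * (1 - l * v)) * (1 + k * K - K)) =
        - α * (v * ((1 + k * K - K) - (1 + k * K - l * K) * v)) := by
      field_simp at hE
      linarith [hE]
    have hDA : (1 - k + α * k) * (1 + k * K - K) ≠ 0 := mul_ne_zero hDne hAne
    have hd0 : ((deriv (deriv vc) ξ - c * deriv vc ξ) * (1 + k * K * (1 - l * v)) +
        v * ((1 + k * K - K) - (1 + k * K - l * K) * v)) *
        ((1 - k + α * k) * (1 + k * K - K)) = 0 := by
      linear_combination hE' + v * ((1 + k * K - K) - (1 + k * K - l * K) * v) * hA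
    have hdP : (deriv (deriv vc) ξ - c * deriv vc ξ) * (1 + k * K * (1 - l * v)) +
        v * ((1 + k * K - K) - (1 + k * K - l * K) * v) = 0 := by
      rcases mul_eq_zero.mp hd0 with h | h
      · exact h
      · exact absurd h hDA
    have hdval : deriv (deriv vc) ξ - c * deriv vc ξ =
        -(v * ((1 + k * K - K) - (1 + k * K - l * K) * v)) / (1 + k * K * (1 - l * v)) := by
      rw [eq_div_iff hPne]; linarith
    have hrw : K * l * deriv (deriv vc) ξ - c * (K * l * deriv vc ξ) =
        K * l * (-(v * ((1 + k * K - K) - (1 + k * K - l * K) * v)) /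
          (1 + k * K * (1 - l * v))) := by
      rw [← hdval]; ring
    rw [hrw, hQ ξ, ← hv]
    have e1 : (1 : ℝ) - α - (K - K * l * v + v) / (1 + k * K * (1 - l * v)) =
        -(v * (1 - l * (1 - α))) / (1 + k * K * (1 - l * v)) := by
      rw [eq_div_iff hPne, sub_mul, div_mul_cancel₀ _ hPne]
      linear_combination (-(1 - l * v)) * hKD
    rw [e1]
    have e2 : K * l * (-(v * ((1 + k * K - K) - (1 + k * K - l * K) * v)) /
          (1 + k * K * (1 - l * v))) -
        (K - K * l * v) * (-(v * (1 - l * (1 - α))) / (1 + k * K * (1 - l * v))) =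
        (K * v * ((1 - l * v) * (1 - l * (1 - α)) -
          l * ((1 + k * K - K) - (1 + k * K - l * K) * v))) / (1 + k * K * (1 - l * v)) := by
      ring
    rw [e2]
    apply div_nonneg _ hP.le
    have hbr : 0 ≤ (1 - l * v) * (1 - l * (1 - α)) -
        l * ((1 + k * K - K) - (1 + k * K - l * K) * v) := by
      have hv0ξ : 0 < v := by have := hv0 ξ; rwa [← hv] at this
      have key : ((1 - l * v) * (1 - l * (1 - α)) -
          l * ((1 + k * K - K) - (1 + k * K - l * K) * v)) * (1 - k + α * k) =
          (1 - k + α * k) * (1 - l * v) * (1 - l * (1 - α)) - l * α +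
            l * (1 - l * (1 - α)) * v := by
        linear_combination (-l) * hA + (l * v) * hB
      have h1 : 0 ≤ l * v * (1 - l * (1 - α)) * (k * (1 - α)) :=
        mul_nonneg (mul_nonneg (mul_nonneg hl.le hv0ξ.le) hlB.le)
          (mul_nonneg hk.le (by linarith))
      have h2 : 0 ≤ l * (k * (1 - α) ^ 2) :=
        mul_nonneg hl.le (mul_nonneg hk.le (sq_nonneg _))
      have h3 : 0 ≤ ((1 - l * v) * (1 - l * (1 - α)) -
          l * ((1 + k * K - K) - (1 + k * K - l * K) * v)) * (1 - k + α * k) := by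
        nlinarith [key, h1, h2]
      have h4 := div_nonneg h3 hD.le
      rwa [mul_div_cancel_right₀ _ hDne] at h4
    have hv0ξ : 0 < v := by have := hv0 ξ; rwa [← hv] at this
    exact mul_nonneg (mul_nonneg hK0.le hv0ξ.le) hbr
  · -- v equation
    intro ξ
    set v := vc ξ with hv
    have hE := hE2 ξ
    rw [← hv] at hE
    have hP := hP0 ξ
    rw [← hv] at hP
    have hPne : (1 + k * K * (1 - l * v)) ≠ 0 := ne_of_gt hP
    have hDne : (1 - k + α * k) ≠ 0 := ne_of_gt hD
    have hAne : (1 + k * K - K) ≠ 0 := ne_of_gt hA0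
    have hQne : 1 + k * (K - K * l * v) ≠ 0 := by
      rw [show 1 + k * (K - K * l * v) = 1 + k * K * (1 - l * v) by ring]; exact hPne
    have hE' : (deriv (deriv vc) ξ - c * deriv vc ξ) *
        ((1 - k + α * k) * (1 + k * K * (1 - l * v)) * (1 + k * K - K)) =
        - α * (v * ((1 + k * K - K) - (1 + k * K - l * K) * v)) := by
      field_simp at hE
      linarith [hE]
    have hDA : (1 - k + α * k) * (1 + k * K - K) ≠ 0 := mul_ne_zero hDne hAne
    have hd0 : ((deriv (deriv vc) ξ - c * deriv vc ξ) * (1 + k * K * (1 - l * v)) +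
        v * ((1 + k * K - K) - (1 + k * K - l * K) * v)) *
        ((1 - k + α * k) * (1 + k * K - K)) = 0 := by
      linear_combination hE' + v * ((1 + k * K - K) - (1 + k * K - l * K) * v) * hA
    have hdP : (deriv (deriv vc) ξ - c * deriv vc ξ) * (1 + k * K * (1 - l * v)) +
        v * ((1 + k * K - K) - (1 + k * K - l * K) * v) = 0 := by
      rcases mul_eq_zero.mp hd0 with h | h
      · exact h
      · exact absurd h hDA
    have hdval : deriv (deriv vc) ξ - c * deriv vc ξ =
        -(v * ((1 + k * K - K) - (1 + k * K - l * K) * v)) / (1 + k * K * (1 - l * v)) := by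
      rw [eq_div_iff hPne]; linarith
    constructor
    · rw [hdval, hQ ξ, ← hv]
      have e3 : (1 : ℝ) - (K - K * l * v + v) / (1 + k * K * (1 - l * v)) =
          ((1 + k * K - K) + K * l * v * (1 - k) - v) / (1 + k * K * (1 - l * v)) := by
        rw [eq_div_iff hPne, sub_mul, div_mul_cancel₀ _ hPne]
        ring
      rw [e3]
      field_simp
      ring
    · apply mul_nonneg (sq_nonneg _)
      apply div_nonneg _ hP.le
      have : (0:ℝ) ≤ 1 - l := by linarith
      positivity
  · simpa using hvc_bot.const_mul (K * l)
  · simpa using hvc_top.const_mul (K * l)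
  · calc K * l * ((1 + k * K - K) / (1 + k * K - l * K))
        = K * ((l * (1 + k * K - K)) / (1 + k * K - l * K)) := by ring
      _ ≤ K * 1 := by
          apply mul_le_mul_of_nonneg_left _ hK0.le
          exact (div_le_one hB0).mpr hlAB.le
      _ = K := mul_one K
  · exact (div_le_one hB0).mpr hAB
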